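/- Let W be a standard Brownian motion and for real c, d with d ≠ 0 define J(r) = (1/d)·∫₀^r e^{c(r−s)} sin(d(r−s)) dW(s) and K(r) = (1/d)·∫₀^r e^{c(r−s)} cos(d(r−s)) dW(s). Then J satisfies the pathwise differential relation dJ(r) = (c·J(r) + d·K(r)) dr; in particular J is of class C¹ in r with derivative G(r) = c·J(r) + d·K(r). -/

import Mathlib

open Filter MeasureTheory intervalIntegral
open Topology

/-- Pathwise Itô integral `∫₀^r f dW` along the path `w`, defined as the limit of
left-endpoint Riemann–Stieltjes sums over uniform partitions of `[0, r]`. -/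
noncomputable def itoInt (f w : ℝ → ℝ) (r : ℝ) : ℝ :=
  limUnder atTop (fun n : ℕ => ∑ k ∈ Finset.range n,
    f ((k : ℝ) * r / n) * (w (((k : ℝ) + 1) * r / n) - w ((k : ℝ) * r / n)))

/-- `J(r) = (1/d)·∫₀^r e^{c(r−s)} sin(d(r−s)) dW(s)`. -/
noncomputable def Jp (c d : ℝ) (w : ℝ → ℝ) (r : ℝ) : ℝ :=
  (1 / d) * itoInt (fun s => Real.exp (c * (r - s)) * Real.sin (d * (r - s))) w r

/-- `K(r) = (1/d)·∫₀^r e^{c(r−s)} cos(d(r−s)) dW(s)`. -/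
noncomputable def Kp (c d : ℝ) (w : ℝ → ℝ) (r : ℝ) : ℝ :=
  (1 / d) * itoInt (fun s => Real.exp (c * (r - s)) * Real.cos (d * (r - s))) w r

/-- `G(r) = c·J(r) + d·K(r)`. -/
noncomputable def Gp (c d : ℝ) (w : ℝ → ℝ) (r : ℝ) : ℝ :=
  c * Jp c d w r + d * Kp c d w r



lemma mem_uIcc_unit_mul {a r : ℝ} (h0 : 0 ≤ a) (h1 : a ≤ 1) : a * r ∈ Set.uIcc 0 r := by
  rcases le_total 0 r with hr | hr
  · rw [Set.uIcc_of_le hr]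
    exact ⟨mul_nonneg h0 hr, by nlinarith⟩
  · rw [Set.uIcc_of_ge hr]
    exact ⟨by nlinarith, mul_nonpos_of_nonneg_of_nonpos h0 hr⟩

lemma abs_sub_le_of_mem_uIcc {a b t : ℝ} (ht : t ∈ Set.uIcc a b) : |b - t| ≤ |b - a| := by
  rcases le_total a b with h | h
  · rw [Set.uIcc_of_le h] at ht
    rw [abs_of_nonneg (by linarith [ht.2]), abs_of_nonneg (by linarith)]
    linarith [ht.1]
  · rw [Set.uIcc_of_ge h] at ht
    rw [abs_of_nonpos (by linarith [ht.1]), abs_of_nonpos (by linarith)]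
    linarith [ht.2]

lemma rs_tendsto {f f' w : ℝ → ℝ} (hf : ∀ x, HasDerivAt f (f' x) x)
    (hf'c : Continuous f') (hw : Continuous w) (r : ℝ) :
    Tendsto (fun n : ℕ => ∑ k ∈ Finset.range n,
      f ((k : ℝ) * r / n) * (w (((k : ℝ) + 1) * r / n) - w ((k : ℝ) * r / n)))
      atTop (𝓝 (f r * w r - f 0 * w 0 - ∫ t in (0:ℝ)..r, f' t * w t)) := by
  set K : Set ℝ := Set.uIcc 0 r with hK
  -- membership of partition points
  have hmem : ∀ (n : ℕ) (k : ℕ), k ≤ n → (k : ℝ) * r / n ∈ K := by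
    intro n k hk
    rcases Nat.eq_zero_or_pos n with rfl | hn
    · simp only [Nat.cast_zero, div_zero]
      exact Set.left_mem_uIcc
    have hn' : (0:ℝ) < n := by exact_mod_cast hn
    have : (k : ℝ) * r / n = ((k : ℝ) / n) * r := by ring
    rw [this]
    exact mem_uIcc_unit_mul (by positivity) (by
      rw [div_le_one hn']; exact_mod_cast hk)
  -- integrability
  have hint : ∀ a b : ℝ, IntervalIntegrable (fun t => f' t * w t) volume a b :=
    fun a b => (hf'c.mul hw).intervalIntegrable a b
  -- the error terms
  set D : ℕ → ℝ := fun n => ∑ k ∈ Finset.range n,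
    ∫ t in ((k:ℝ) * r / n)..(((k:ℝ)+1) * r / n), f' t * (w (((k:ℝ)+1) * r / n) - w t) with hD
  have hDtend : Tendsto D atTop (𝓝 0) := by
    obtain ⟨M, hM⟩ := IsCompact.exists_bound_of_continuousOn isCompact_uIcc (hf'c.continuousOn (s := K))
    have hM0 : 0 ≤ M := le_trans (norm_nonneg _) (hM 0 Set.left_mem_uIcc)
    have hwu : UniformContinuousOn w K :=
      IsCompact.uniformContinuousOn_of_continuous isCompact_uIcc hw.continuousOn
    rw [Metric.tendsto_atTop]
    intro ε hε
    set ε' : ℝ := ε / (M * |r| + 2) with hε'def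
    have hε' : 0 < ε' := by positivity
    obtain ⟨δ, hδ, hδ'⟩ := Metric.uniformContinuousOn_iff.mp hwu ε' hε'
    obtain ⟨N, hN⟩ := exists_nat_gt (|r| / δ)
    refine ⟨max N 1, fun n hn => ?_⟩
    have hn1 : 1 ≤ n := le_trans (le_max_right N 1) hn
    have hnN : N ≤ n := le_trans (le_max_left N 1) hn
    have hn0 : (0:ℝ) < n := by exact_mod_cast hn1
    have hN0 : (0:ℝ) < N := lt_of_le_of_lt (div_nonneg (abs_nonneg r) hδ.le) hN
    have hNn : (N:ℝ) ≤ n := by exact_mod_cast hnN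
    have hrn : |r| / n < δ := by
      have h1 : |r| < N * δ := by
        have := (div_lt_iff₀ hδ).mp hN; linarith
      calc |r| / n ≤ |r| / N := div_le_div_of_nonneg_left (abs_nonneg r) hN0 hNn
        _ < δ := by rw [div_lt_iff₀ hN0]; linarith
    -- bound each term
    have hterm : ∀ k ∈ Finset.range n,
        ‖∫ t in ((k:ℝ) * r / n)..(((k:ℝ)+1) * r / n), f' t * (w (((k:ℝ)+1) * r / n) - w t)‖
          ≤ (M * ε') * (|r| / n) := by
      intro k hk
      rw [Finset.mem_range] at hk
      set a := (k:ℝ) * r / n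
      set b := ((k:ℝ)+1) * r / n
      have hb : b = ((k+1 : ℕ) : ℝ) * r / n := by push_cast; ring
      have hamem : a ∈ K := hmem n k hk.le
      have hbmem : b ∈ K := by rw [hb]; exact hmem n (k+1) hk
      have hba : b - a = r / n := by simp only [a, b]; ring
      have habs : |b - a| = |r| / n := by rw [hba, abs_div, abs_of_pos hn0]
      have hsub : Set.uIcc a b ⊆ K := Set.uIcc_subset_uIcc hamem hbmem
      have hbd : ∀ t ∈ Set.uIoc a b, ‖f' t * (w b - w t)‖ ≤ M * ε' := by
        intro t ht
        have ht' : t ∈ Set.uIcc a b := Set.uIoc_subset_uIcc ht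
        have htK : t ∈ K := hsub ht'
        have h1 : ‖f' t‖ ≤ M := hM t htK
        have h2 : ‖w b - w t‖ ≤ ε' := by
          have hd1 : dist b t ≤ |r| / n := by
            rw [Real.dist_eq, ← habs]; exact abs_sub_le_of_mem_uIcc ht'
          have := hδ' b hbmem t htK (lt_of_le_of_lt hd1 hrn)
          rw [Real.dist_eq] at this
          exact le_of_lt (by simpa [Real.norm_eq_abs] using this)
        calc ‖f' t * (w b - w t)‖ = ‖f' t‖ * ‖w b - w t‖ := norm_mul _ _
          _ ≤ M * ε' := mul_le_mul h1 h2 (norm_nonneg _) hM0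
      calc ‖∫ t in a..b, f' t * (w b - w t)‖ ≤ (M * ε') * |b - a| :=
            intervalIntegral.norm_integral_le_of_norm_le_const hbd
        _ = (M * ε') * (|r| / n) := by rw [habs]
    have hDb : ‖D n‖ ≤ M * ε' * |r| := by
      calc ‖D n‖ ≤ ∑ k ∈ Finset.range n, ‖∫ t in ((k:ℝ) * r / n)..(((k:ℝ)+1) * r / n),
              f' t * (w (((k:ℝ)+1) * r / n) - w t)‖ := norm_sum_le _ _
        _ ≤ ∑ _k ∈ Finset.range n, (M * ε') * (|r| / n) := Finset.sum_le_sum hterm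
        _ = n * ((M * ε') * (|r| / n)) := by rw [Finset.sum_const, Finset.card_range]; ring
        _ = M * ε' * |r| := by field_simp
    rw [dist_zero_right]
    calc ‖D n‖ ≤ M * ε' * |r| := hDb
      _ < ε := by
          rw [hε'def]
          have h2 : (0:ℝ) < M * |r| + 2 := by positivity
          rw [show M * (ε / (M * |r| + 2)) * |r| = (M * |r|) * ε / (M * |r| + 2) by ring,
            div_lt_iff₀ h2]
          nlinarith [abs_nonneg r]
  -- exact identity for n ≥ 1
  have hEq : ∀ n : ℕ, 1 ≤ n → (∑ k ∈ Finset.range n,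
      f ((k : ℝ) * r / n) * (w (((k : ℝ) + 1) * r / n) - w ((k : ℝ) * r / n)))
      = f r * w r - f 0 * w 0 - ((∫ t in (0:ℝ)..r, f' t * w t) + D n) := by
    intro n hn
    have hn0 : ((n:ℝ)) ≠ 0 := by positivity
    set s : ℕ → ℝ := fun k => (k:ℝ) * r / n with hs
    have hs0 : s 0 = 0 := by simp [hs]
    have hsn : s n = r := by simp only [hs]; field_simp
    have hcast : ∀ k : ℕ, ((k:ℝ)+1) * r / n = s (k+1) := by intro k; push_cast [hs]; ring
    have hItotal : (∫ t in (0:ℝ)..r, f' t * w t)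
        = ∑ k ∈ Finset.range n, ∫ t in s k..s (k+1), f' t * w t := by
      rw [← hs0, ← hsn]
      exact (intervalIntegral.sum_integral_adjacent_intervals (fun k _ => hint _ _)).symm
    have hterm : ∀ k : ℕ,
        f (s k) * (w (s (k+1)) - w (s k))
        = (f (s (k+1)) * w (s (k+1)) - f (s k) * w (s k))
          - ((∫ t in s k..s (k+1), f' t * w t) + ∫ t in s k..s (k+1), f' t * (w (s (k+1)) - w t)) := by
      intro k
      have hfd : f (s (k+1)) - f (s k) = ∫ t in s k..s (k+1), f' t :=
        (intervalIntegral.integral_eq_sub_of_hasDerivAt (fun t _ => hf t)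
          (hf'c.intervalIntegrable _ _)).symm
      have hsplit : (∫ t in s k..s (k+1), f' t * w t) + (∫ t in s k..s (k+1), f' t * (w (s (k+1)) - w t))
          = ∫ t in s k..s (k+1), f' t * w (s (k+1)) := by
        rw [← intervalIntegral.integral_add (g := fun t => f' t * (w (s (k+1)) - w t)) (hint _ _)
          ((hf'c.mul ((continuous_const).sub hw)).intervalIntegrable _ _)]
        congr 1; funext t; ring
      have hconst : (∫ t in s k..s (k+1), f' t * w (s (k+1)))
          = (∫ t in s k..s (k+1), f' t) * w (s (k+1)) := by
        rw [intervalIntegral.integral_mul_const]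
      rw [hsplit, hconst, ← hfd]; ring
    calc (∑ k ∈ Finset.range n,
        f ((k : ℝ) * r / n) * (w (((k : ℝ) + 1) * r / n) - w ((k : ℝ) * r / n)))
        = ∑ k ∈ Finset.range n, f (s k) * (w (s (k+1)) - w (s k)) := by
          apply Finset.sum_congr rfl; intro k _; rw [hcast]
      _ = ∑ k ∈ Finset.range n, ((f (s (k+1)) * w (s (k+1)) - f (s k) * w (s k))
          - ((∫ t in s k..s (k+1), f' t * w t) + ∫ t in s k..s (k+1), f' t * (w (s (k+1)) - w t))) := by
          apply Finset.sum_congr rfl; intro k _; exact hterm k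
      _ = (∑ k ∈ Finset.range n, (f (s (k+1)) * w (s (k+1)) - f (s k) * w (s k)))
          - ((∑ k ∈ Finset.range n, ∫ t in s k..s (k+1), f' t * w t)
            + ∑ k ∈ Finset.range n, ∫ t in s k..s (k+1), f' t * (w (s (k+1)) - w t)) := by
          rw [Finset.sum_sub_distrib, Finset.sum_add_distrib]
      _ = f r * w r - f 0 * w 0 - ((∫ t in (0:ℝ)..r, f' t * w t) + D n) := by
          rw [Finset.sum_range_sub (fun k => f (s k) * w (s k)), hs0, hsn, hItotal, hD]
          congr 2
          apply Finset.sum_congr rfl; intro k _; rw [hcast]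
  have htend2 : Tendsto (fun n : ℕ => f r * w r - f 0 * w 0 - ((∫ t in (0:ℝ)..r, f' t * w t) + D n))
      atTop (𝓝 (f r * w r - f 0 * w 0 - ∫ t in (0:ℝ)..r, f' t * w t)) := by
    have := (tendsto_const_nhds (x := (∫ t in (0:ℝ)..r, f' t * w t)) (f := atTop (α := ℕ))).add hDtend
    rw [add_zero] at this
    exact tendsto_const_nhds.sub this
  apply htend2.congr'
  filter_upwards [eventually_ge_atTop 1] with n hn
  exact (hEq n hn).symm

lemma itoInt_eq {f f' w : ℝ → ℝ} (hf : ∀ x, HasDerivAt f (f' x) x)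
    (hf'c : Continuous f') (hw : Continuous w) (r : ℝ) :
    itoInt f w r = f r * w r - f 0 * w 0 - ∫ t in (0:ℝ)..r, f' t * w t :=
  (rs_tendsto hf hf'c hw r).limUnder_eq

lemma Jp_eq (c d : ℝ) {w : ℝ → ℝ} (hw : Continuous w) (hw0 : w 0 = 0) (r : ℝ) :
    Jp c d w r = (1/d) * ((Real.exp (c*r) * (c * Real.sin (d*r) + d * Real.cos (d*r)))
        * (∫ s in (0:ℝ)..r, Real.exp (-(c*s)) * Real.cos (d*s) * w s)
      + (Real.exp (c*r) * (d * Real.sin (d*r) - c * Real.cos (d*r)))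
        * (∫ s in (0:ℝ)..r, Real.exp (-(c*s)) * Real.sin (d*s) * w s)) := by
  have hderiv : ∀ x : ℝ, HasDerivAt (fun s => Real.exp (c * (r - s)) * Real.sin (d * (r - s)))
      (-(Real.exp (c * (r - x)) * (c * Real.sin (d * (r - x)) + d * Real.cos (d * (r - x))))) x := by
    intro x
    have hc : HasDerivAt (fun s : ℝ => c * (r - s)) (-c) x := by
      simpa using ((hasDerivAt_id x).const_sub r).const_mul c
    have hdd : HasDerivAt (fun s : ℝ => d * (r - s)) (-d) x := by
      simpa using ((hasDerivAt_id x).const_sub r).const_mul d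
    have : HasDerivAt (fun s => Real.exp (c * (r - s)) * Real.sin (d * (r - s))) _ x :=
      hc.exp.mul hdd.sin
    convert this using 1
    ring
  have hf'c : Continuous fun x =>
      -(Real.exp (c * (r - x)) * (c * Real.sin (d * (r - x)) + d * Real.cos (d * (r - x)))) := by
    fun_prop
  rw [Jp, itoInt_eq hderiv hf'c hw r]
  have h0 : Real.exp (c * (r - r)) * Real.sin (d * (r - r)) = 0 := by simp
  rw [h0, hw0]
  have hptwise : ∀ t : ℝ,
      -(Real.exp (c * (r - t)) * (c * Real.sin (d * (r - t)) + d * Real.cos (d * (r - t)))) * w t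
      = -((Real.exp (c*r) * (c * Real.sin (d*r) + d * Real.cos (d*r)))
            * (Real.exp (-(c*t)) * Real.cos (d*t) * w t)
          + (Real.exp (c*r) * (d * Real.sin (d*r) - c * Real.cos (d*r)))
            * (Real.exp (-(c*t)) * Real.sin (d*t) * w t)) := by
    intro t
    have e1 : c * (r - t) = c*r + -(c*t) := by ring
    have e2 : d * (r - t) = d*r - d*t := by ring
    rw [e1, e2, Real.exp_add, Real.sin_sub, Real.cos_sub]
    ring
  have hIeq : (∫ t in (0:ℝ)..r,
      -(Real.exp (c * (r - t)) * (c * Real.sin (d * (r - t)) + d * Real.cos (d * (r - t)))) * w t)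
      = -((Real.exp (c*r) * (c * Real.sin (d*r) + d * Real.cos (d*r)))
            * (∫ s in (0:ℝ)..r, Real.exp (-(c*s)) * Real.cos (d*s) * w s)
          + (Real.exp (c*r) * (d * Real.sin (d*r) - c * Real.cos (d*r)))
            * (∫ s in (0:ℝ)..r, Real.exp (-(c*s)) * Real.sin (d*s) * w s)) := by
    rw [show (fun t => -(Real.exp (c * (r - t)) * (c * Real.sin (d * (r - t)) + d * Real.cos (d * (r - t)))) * w t)
        = fun t => -((Real.exp (c*r) * (c * Real.sin (d*r) + d * Real.cos (d*r)))
            * (Real.exp (-(c*t)) * Real.cos (d*t) * w t)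
          + (Real.exp (c*r) * (d * Real.sin (d*r) - c * Real.cos (d*r)))
            * (Real.exp (-(c*t)) * Real.sin (d*t) * w t)) from funext hptwise]
    rw [intervalIntegral.integral_neg, intervalIntegral.integral_add
      (by apply Continuous.intervalIntegrable; fun_prop)
      (by apply Continuous.intervalIntegrable; fun_prop),
      intervalIntegral.integral_const_mul, intervalIntegral.integral_const_mul]
  rw [hIeq]
  ring

lemma Kp_eq (c d : ℝ) {w : ℝ → ℝ} (hw : Continuous w) (hw0 : w 0 = 0) (r : ℝ) :
    Kp c d w r = (1/d) * (w r
      - (Real.exp (c*r) * (d * Real.sin (d*r) - c * Real.cos (d*r)))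
        * (∫ s in (0:ℝ)..r, Real.exp (-(c*s)) * Real.cos (d*s) * w s)
      + (Real.exp (c*r) * (c * Real.sin (d*r) + d * Real.cos (d*r)))
        * (∫ s in (0:ℝ)..r, Real.exp (-(c*s)) * Real.sin (d*s) * w s)) := by
  have hderiv : ∀ x : ℝ, HasDerivAt (fun s => Real.exp (c * (r - s)) * Real.cos (d * (r - s)))
      (Real.exp (c * (r - x)) * (d * Real.sin (d * (r - x)) - c * Real.cos (d * (r - x)))) x := by
    intro x
    have hc : HasDerivAt (fun s : ℝ => c * (r - s)) (-c) x := by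
      simpa using ((hasDerivAt_id x).const_sub r).const_mul c
    have hdd : HasDerivAt (fun s : ℝ => d * (r - s)) (-d) x := by
      simpa using ((hasDerivAt_id x).const_sub r).const_mul d
    have : HasDerivAt (fun s => Real.exp (c * (r - s)) * Real.cos (d * (r - s))) _ x :=
      hc.exp.mul hdd.cos
    convert this using 1
    ring
  have hf'c : Continuous fun x =>
      Real.exp (c * (r - x)) * (d * Real.sin (d * (r - x)) - c * Real.cos (d * (r - x))) := by
    fun_prop
  rw [Kp, itoInt_eq hderiv hf'c hw r]
  have h0 : Real.exp (c * (r - r)) * Real.cos (d * (r - r)) = 1 := by simp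
  rw [h0, hw0]
  have hptwise : ∀ t : ℝ,
      Real.exp (c * (r - t)) * (d * Real.sin (d * (r - t)) - c * Real.cos (d * (r - t))) * w t
      = (Real.exp (c*r) * (d * Real.sin (d*r) - c * Real.cos (d*r)))
            * (Real.exp (-(c*t)) * Real.cos (d*t) * w t)
        - (Real.exp (c*r) * (c * Real.sin (d*r) + d * Real.cos (d*r)))
            * (Real.exp (-(c*t)) * Real.sin (d*t) * w t) := by
    intro t
    have e1 : c * (r - t) = c*r + -(c*t) := by ring
    have e2 : d * (r - t) = d*r - d*t := by ring
    rw [e1, e2, Real.exp_add, Real.sin_sub, Real.cos_sub]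
    ring
  have hIeq : (∫ t in (0:ℝ)..r,
      Real.exp (c * (r - t)) * (d * Real.sin (d * (r - t)) - c * Real.cos (d * (r - t))) * w t)
      = (Real.exp (c*r) * (d * Real.sin (d*r) - c * Real.cos (d*r)))
            * (∫ s in (0:ℝ)..r, Real.exp (-(c*s)) * Real.cos (d*s) * w s)
        - (Real.exp (c*r) * (c * Real.sin (d*r) + d * Real.cos (d*r)))
            * (∫ s in (0:ℝ)..r, Real.exp (-(c*s)) * Real.sin (d*s) * w s) := by
    rw [show (fun t => Real.exp (c * (r - t)) * (d * Real.sin (d * (r - t)) - c * Real.cos (d * (r - t))) * w t)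
        = fun t => (Real.exp (c*r) * (d * Real.sin (d*r) - c * Real.cos (d*r)))
            * (Real.exp (-(c*t)) * Real.cos (d*t) * w t)
        - (Real.exp (c*r) * (c * Real.sin (d*r) + d * Real.cos (d*r)))
            * (Real.exp (-(c*t)) * Real.sin (d*t) * w t) from funext hptwise]
    rw [intervalIntegral.integral_sub
      (by apply Continuous.intervalIntegrable; fun_prop)
      (by apply Continuous.intervalIntegrable; fun_prop),
      intervalIntegral.integral_const_mul, intervalIntegral.integral_const_mul]
  rw [hIeq]
  ring

/-- Lemma A.3(a): `dJ(r) = (c·J(r) + d·K(r)) dr = G(r) dr`; in particular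
`J` is `C¹` with derivative `G`, almost surely. -/
theorem stmt13 {Ω : Type*} [MeasurableSpace Ω] (P : Measure Ω) [IsProbabilityMeasure P]
    (W : Ω → ℝ → ℝ) (c d : ℝ) (hd : d ≠ 0)
    (hWcont : ∀ ω, Continuous (W ω)) (hW0 : ∀ ω, W ω 0 = 0) :
    ∀ᵐ ω ∂P,
      (∀ r ∈ Set.Icc (0 : ℝ) 1, HasDerivAt (Jp c d (W ω)) (Gp c d (W ω) r) r) ∧
      ContinuousOn (Gp c d (W ω)) (Set.Icc (0 : ℝ) 1) := by
  apply ae_of_all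
  intro ω
  set w : ℝ → ℝ := W ω with hwdef
  have hw : Continuous w := hWcont ω
  have hw0 : w 0 = 0 := hW0 ω
  set aF : ℝ → ℝ := fun s => Real.exp (-(c*s)) * Real.cos (d*s) * w s with haF
  set bF : ℝ → ℝ := fun s => Real.exp (-(c*s)) * Real.sin (d*s) * w s with hbF
  have haC : Continuous aF := by fun_prop
  have hbC : Continuous bF := by fun_prop
  set IaF : ℝ → ℝ := fun x => ∫ s in (0:ℝ)..x, aF s with hIaF
  set IbF : ℝ → ℝ := fun x => ∫ s in (0:ℝ)..x, bF s with hIbF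
  have hIa : ∀ x, HasDerivAt IaF (aF x) x := fun x => (haC.integral_hasStrictDerivAt 0 x).hasDerivAt
  have hIb : ∀ x, HasDerivAt IbF (bF x) x := fun x => (hbC.integral_hasStrictDerivAt 0 x).hasDerivAt
  set Pf : ℝ → ℝ := fun x => Real.exp (c*x) * (c * Real.sin (d*x) + d * Real.cos (d*x)) with hPf
  set Qf : ℝ → ℝ := fun x => Real.exp (c*x) * (d * Real.sin (d*x) - c * Real.cos (d*x)) with hQf
  have hP : ∀ x : ℝ, HasDerivAt Pf
      (Real.exp (c*x) * ((c^2 - d^2) * Real.sin (d*x) + 2*c*d * Real.cos (d*x))) x := by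
    intro x
    have hcr : HasDerivAt (fun y : ℝ => c*y) c x := by simpa using (hasDerivAt_id x).const_mul c
    have hdr : HasDerivAt (fun y : ℝ => d*y) d x := by simpa using (hasDerivAt_id x).const_mul d
    have : HasDerivAt (fun y => Real.exp (c*y) * (c * Real.sin (d*y) + d * Real.cos (d*y))) _ x :=
      hcr.exp.mul ((hdr.sin.const_mul c).add (hdr.cos.const_mul d))
    convert this using 1
    ring
  have hQ : ∀ x : ℝ, HasDerivAt Qf
      (Real.exp (c*x) * (2*c*d * Real.sin (d*x) + (d^2 - c^2) * Real.cos (d*x))) x := by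
    intro x
    have hcr : HasDerivAt (fun y : ℝ => c*y) c x := by simpa using (hasDerivAt_id x).const_mul c
    have hdr : HasDerivAt (fun y : ℝ => d*y) d x := by simpa using (hasDerivAt_id x).const_mul d
    have : HasDerivAt (fun y => Real.exp (c*y) * (d * Real.sin (d*y) - c * Real.cos (d*y))) _ x :=
      hcr.exp.mul ((hdr.sin.const_mul d).sub (hdr.cos.const_mul c))
    convert this using 1
    ring
  have hJfun : Jp c d w = fun x => (1/d) * (Pf x * IaF x + Qf x * IbF x) :=
    funext fun x => Jp_eq c d hw hw0 x
  have hKfun : Kp c d w = fun x => (1/d) * (w x - Qf x * IaF x + Pf x * IbF x) :=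
    funext fun x => Kp_eq c d hw hw0 x
  have hJderiv : ∀ r : ℝ, HasDerivAt (Jp c d w) (Gp c d w r) r := by
    intro r
    have hbig : HasDerivAt (fun x => (1/d) * (Pf x * IaF x + Qf x * IbF x))
        ((1/d) * ((Real.exp (c*r) * ((c^2 - d^2) * Real.sin (d*r) + 2*c*d * Real.cos (d*r)) * IaF r
            + Pf r * aF r)
          + (Real.exp (c*r) * (2*c*d * Real.sin (d*r) + (d^2 - c^2) * Real.cos (d*r)) * IbF r
            + Qf r * bF r))) r :=
      (((hP r).mul (hIa r)).add ((hQ r).mul (hIb r))).const_mul (1/d)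
    rw [hJfun]
    convert hbig using 1
    simp only [Gp]
    rw [Jp_eq c d hw hw0 r, Kp_eq c d hw hw0 r]
    simp only [hPf, hQf, haF, hbF, hIaF, hIbF]
    have hEE : Real.exp (c*r) * Real.exp (-(c*r)) = 1 := by
      rw [← Real.exp_add]; simp
    have hSC : Real.sin (d*r)^2 + Real.cos (d*r)^2 = 1 := Real.sin_sq_add_cos_sq (d*r)
    field_simp
    linear_combination (-(d * w r * (Real.sin (d*r)^2 + Real.cos (d*r)^2))) * hEE - (d * w r) * hSC
  refine ⟨fun r _ => hJderiv r, ?_⟩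
  have hGcont : Continuous (Gp c d w) := by
    have hJc : Continuous (Jp c d w) :=
      continuous_iff_continuousAt.mpr fun r => (hJderiv r).continuousAt
    have hKc : Continuous (Kp c d w) := by
      rw [hKfun]
      have hIaC : Continuous IaF := continuous_iff_continuousAt.mpr fun x => (hIa x).continuousAt
      have hIbC : Continuous IbF := continuous_iff_continuousAt.mpr fun x => (hIb x).continuousAt
      fun_prop
    have : Gp c d w = fun r => c * Jp c d w r + d * Kp c d w r := rfl
    rw [this]
    fun_prop
  exact hGcont.continuousOn
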